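/- Let ω, λ be real numbers, let k be a positive natural number, set ρ = kω + ω/2 - λ, and for y > 0 set g(y) = y^{-iω/2} · Σ_{n=1}^∞ (-1)^{n+1} (n·y)^{-iω/2} (n·y)^{-1/2 + iρ}. Then for every real x > 0, the series x^{iω/2} · Σ_{m=1}^∞ (-1)^{m+1} m^{-1} (x/m)^{iω/2} · g(x/m) converges (as the limit of its partial sums) and its sum equals E_k · x^{-1/2 + iρ}, where E_k = |(1 - 2^{1/2 - i(kω - λ)}) · ζ(1/2 + i(λ - kω))|² is a nonnegative real number; that is, x^{-1/2+iρ} is an eigenfunction of H₋ with real nonnegative eigenvalue E_k. -/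

import Mathlib

open Filter Finset Complex

noncomputable def etaTerm (s : ℂ) (n : ℕ) : ℂ := (-1 : ℂ) ^ n * ((n + 1 : ℕ) : ℂ) ^ (-s)

noncomputable def etaPair (s : ℂ) (n : ℕ) : ℂ :=
  ((2 * n + 1 : ℕ) : ℂ) ^ (-s) - ((2 * n + 2 : ℕ) : ℂ) ^ (-s)

lemma etaTerm_pairing (s : ℂ) (N : ℕ) :
    ∑ j ∈ range (2 * N), etaTerm s j = ∑ n ∈ range N, etaPair s n := by
  induction N with
  | zero => simp
  | succ N ih =>
    rw [mul_add, mul_one, show 2 * N + 2 = (2 * N + 1) + 1 by ring, sum_range_succ,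
      sum_range_succ, ih, sum_range_succ]
    have h1 : ((-1 : ℂ)) ^ (2 * N) = 1 := by
      rw [pow_mul]; norm_num
    have h2 : ((-1 : ℂ)) ^ (2 * N + 1) = -1 := by
      rw [pow_succ, h1]; ring
    rw [add_assoc]
    congr 1
    simp only [etaTerm, etaPair, h1, h2]
    push_cast
    ring_nf

lemma hasDerivAt_cpow_neg (s : ℂ) (hs : s ≠ 0) {x : ℝ} (hx : 0 < x) :
    HasDerivAt (fun t : ℝ => (t : ℂ) ^ (-s)) (-s * (x : ℂ) ^ (-s - 1)) x := by
  have hr : (-s - 1 : ℂ) ≠ -1 := by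
    intro h
    apply hs
    have : -s = 0 := by linear_combination h
    simpa using this.symm ▸ (neg_eq_zero.mp this)
  have h := hasDerivAt_ofReal_cpow_const' (ne_of_gt hx) hr
  have h2 := h.const_mul (-s)
  have hfun : (fun y : ℝ => -s * ((y : ℂ) ^ (-s - 1 + 1) / (-s - 1 + 1))) =
      fun y : ℝ => (y : ℂ) ^ (-s) := by
    funext y
    rw [show (-s - 1 + 1 : ℂ) = -s by ring]
    field_simp
  rw [hfun] at h2
  convert h2 using 1



lemma etaPair_bound (s : ℂ) (hs : 0 < s.re) (n : ℕ) :
    ‖etaPair s n‖ ≤ ‖s‖ * ((2 * n + 1 : ℝ)) ^ (-s.re - 1) := by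
  have hs0 : s ≠ 0 := by
    intro h; rw [h] at hs; simp at hs
  set a : ℝ := (2 * n + 1 : ℝ)
  set b : ℝ := (2 * n + 2 : ℝ)
  have ha : (0:ℝ) < a := by positivity
  have hab : a ≤ b := by norm_num [a, b]
  have key : ∀ x ∈ Set.Icc a b, HasDerivWithinAt (fun t : ℝ => (t : ℂ) ^ (-s))
      (-s * (x : ℂ) ^ (-s - 1)) (Set.Icc a b) x := by
    intro x hx
    exact (hasDerivAt_cpow_neg s hs0 (lt_of_lt_of_le ha hx.1)).hasDerivWithinAt
  have bd : ∀ x ∈ Set.Icc a b, ‖-s * (x : ℂ) ^ (-s - 1)‖ ≤ ‖s‖ * a ^ (-s.re - 1) := by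
    intro x hx
    have hx0 : (0:ℝ) < x := lt_of_lt_of_le ha hx.1
    rw [norm_mul, norm_neg]
    gcongr
    rw [Complex.norm_cpow_eq_rpow_re_of_pos hx0]
    have : (-s - 1).re = -s.re - 1 := by simp
    rw [this]
    exact Real.rpow_le_rpow_of_nonpos ha hx.1 (by linarith)
  have h := Convex.norm_image_sub_le_of_norm_hasDerivWithin_le key bd (convex_Icc a b)
    (Set.left_mem_Icc.mpr hab) (Set.right_mem_Icc.mpr hab)
  have hba : ‖b - a‖ = 1 := by simp [a, b]; norm_num
  rw [hba, mul_one] at h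
  have heq : etaPair s n = (fun t : ℝ => (t : ℂ) ^ (-s)) a - (fun t : ℝ => (t : ℂ) ^ (-s)) b := by
    simp only [etaPair, a, b]
    push_cast
    ring_nf
  rw [heq, ← norm_sub_rev]
  exact h

lemma summable_aux (c : ℝ) (σ : ℝ) (hσ : 0 < σ) :
    Summable (fun n : ℕ => c * ((2 * n + 1 : ℝ)) ^ (-σ - 1)) := by
  apply Summable.mul_left
  have h1 : Summable (fun n : ℕ => ((n : ℝ) + 1) ^ (-σ - 1)) := by
    have := (Real.summable_nat_rpow (p := -σ - 1)).mpr (by linarith)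
    have h2 := (summable_nat_add_iff 1).mpr this
    simpa using h2
  apply Summable.of_nonneg_of_le (fun n => Real.rpow_nonneg (by positivity) _) _ h1
  intro n
  apply Real.rpow_le_rpow_of_nonpos (by positivity) (by push_cast; linarith) (by linarith)

lemma etaPair_summable (s : ℂ) (hs : 0 < s.re) : Summable (etaPair s) := by
  apply Summable.of_norm_bounded (summable_aux ‖s‖ s.re hs)
  exact etaPair_bound s hs

noncomputable def etaF (s : ℂ) : ℂ := ∑' n : ℕ, etaPair s n

lemma etaF_tendstoUniformlyOn {K : Set ℂ} (hK : IsCompact K) (hKs : K ⊆ {z : ℂ | 0 < z.re}) :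
    TendstoUniformlyOn (fun N s => ∑ n ∈ range N, etaPair s n) etaF atTop K := by
  rcases K.eq_empty_or_nonempty with rfl | hne
  · simp [TendstoUniformlyOn]
  obtain ⟨z0, hz0K, hmin⟩ := hK.exists_isMinOn hne Complex.continuous_re.continuousOn
  obtain ⟨z1, hz1K, hmax⟩ := hK.exists_isMaxOn hne continuous_norm.continuousOn
  have hδ : 0 < z0.re := hKs hz0K
  apply tendstoUniformlyOn_tsum_nat (f := fun n s => etaPair s n)
    (u := fun n => (‖z1‖ + 1) * ((2 * n + 1 : ℝ)) ^ (-z0.re - 1)) (summable_aux _ _ hδ)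
  intro n z hz
  calc ‖etaPair z n‖ ≤ ‖z‖ * ((2 * n + 1 : ℝ)) ^ (-z.re - 1) := etaPair_bound z (hKs hz) n
    _ ≤ (‖z1‖ + 1) * ((2 * n + 1 : ℝ)) ^ (-z0.re - 1) := by
        apply mul_le_mul
        · have := hmax hz; simp only [Set.mem_setOf_eq] at this
          calc ‖z‖ ≤ ‖z1‖ := this
            _ ≤ ‖z1‖ + 1 := by linarith
        · apply Real.rpow_le_rpow_of_exponent_le (by push_cast; linarith)
          have := hmin hz
          simp only [Set.mem_setOf_eq] at this
          linarith
        · positivity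
        · positivity

lemma isOpen_rePos : IsOpen {z : ℂ | 0 < z.re} := isOpen_lt continuous_const Complex.continuous_re

lemma etaF_differentiableOn : DifferentiableOn ℂ etaF {z : ℂ | 0 < z.re} := by
  have h1 : TendstoLocallyUniformlyOn (fun N s => ∑ n ∈ range N, etaPair s n) etaF
      atTop {z : ℂ | 0 < z.re} := by
    rw [tendstoLocallyUniformlyOn_iff_forall_isCompact isOpen_rePos]
    intro K hKs hK
    exact etaF_tendstoUniformlyOn hK hKs
  apply h1.differentiableOn _ isOpen_rePos
  · filter_upwards with N
    apply DifferentiableOn.fun_sum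
    intro n _
    apply DifferentiableOn.sub
    · apply DifferentiableOn.const_cpow (by fun_prop)
      left
      exact Nat.cast_ne_zero.mpr (by omega)
    · apply DifferentiableOn.const_cpow (by fun_prop)
      left
      exact Nat.cast_ne_zero.mpr (by omega)


lemma etaF_eq_of_one_lt {s : ℂ} (hs : 1 < s.re) :
    etaF s = (1 - 2 ^ ((1 : ℂ) - s)) * riemannZeta s := by
  have hs0 : s ≠ 0 := fun h => by rw [h] at hs; simp at hs; linarith
  set f : ℕ → ℂ := fun n => (n : ℂ) ^ (-s) with hf
  have hf0 : f 0 = 0 := by simp [hf, Complex.zero_cpow (neg_ne_zero.mpr hs0)]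
  have hsum : Summable f := by
    have := Complex.summable_one_div_nat_cpow.mpr hs
    apply this.congr
    intro n
    simp [hf, Complex.cpow_neg, one_div]
  have hZ : riemannZeta s = ∑' n, f n := by
    rw [zeta_eq_tsum_one_div_nat_cpow hs]
    congr 1
    funext n
    simp [hf, Complex.cpow_neg, one_div]
  have hfe : ∀ k : ℕ, f (2 * k) = 2 ^ (-s) * f k := by
    intro k
    rcases Nat.eq_zero_or_pos k with rfl | hk
    · simp [hf0]
    · have h2 : ((2 * k : ℕ) : ℂ) = ((2 : ℝ) : ℂ) * ((k : ℝ) : ℂ) := by push_cast; ring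
      have h3 := Complex.mul_cpow_ofReal_nonneg (a := 2) (b := (k : ℝ)) (by norm_num)
        (Nat.cast_nonneg k) (-s)
      simp only [hf, h2, h3]
      norm_num
  have hse : Summable (fun k => f (2 * k)) := by
    rw [funext hfe]; exact hsum.mul_left _
  have hso : Summable (fun k => f (2 * k + 1)) :=
    hsum.comp_injective (fun a b hab => by omega)
  have hso2 : Summable (fun k => f (2 * k + 2)) :=
    hsum.comp_injective (fun a b hab => by omega)
  have heo : ∑' k, f (2 * k) + ∑' k, f (2 * k + 1) = ∑' k, f k :=
    tsum_even_add_odd hse hso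
  have h2k : ∑' k, f (2 * k) = 2 ^ (-s) * ∑' k, f k := by
    rw [funext hfe, tsum_mul_left]
  have hshift : ∑' k, f (2 * k + 2) = ∑' k, f (2 * k) := by
    have h := Summable.tsum_eq_zero_add hse
    rw [hf0, zero_add] at h
    rw [h]
    apply tsum_congr
    intro k
    congr 1
  have hpair : etaF s = ∑' k, f (2 * k + 1) - ∑' k, f (2 * k + 2) := by
    rw [etaF, ← Summable.tsum_sub hso hso2]
    congr 1
  rw [hpair, hshift, h2k]
  have h21 : (2 : ℂ) ^ ((1 : ℂ) - s) = 2 * 2 ^ (-s) := by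
    rw [show (1 : ℂ) - s = 1 + -s by ring, Complex.cpow_add _ _ (by norm_num), Complex.cpow_one]
  have : ∑' k, f (2 * k + 1) = ∑' k, f k - 2 ^ (-s) * ∑' k, f k := by
    rw [← h2k]; linear_combination heo
  rw [this, hZ, h21]
  ring


lemma etaF_eq {s : ℂ} (hs : 0 < s.re) (hs1 : s ≠ 1) :
    etaF s = (1 - 2 ^ ((1 : ℂ) - s)) * riemannZeta s := by
  set U : Set ℂ := {z : ℂ | 0 < z.re} with hU
  set F : ℂ → ℂ := fun z => (z - 1) * etaF z with hF
  set G : ℂ → ℂ := fun z => (1 - 2 ^ ((1 : ℂ) - z)) * ((z - 1) * riemannZeta z) with hG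
  have htwo : ∀ z : ℂ, DifferentiableAt ℂ (fun w : ℂ => 1 - (2 : ℂ) ^ ((1 : ℂ) - w)) z := by
    intro z
    apply DifferentiableAt.sub (differentiableAt_const _)
    exact DifferentiableAt.const_cpow (by fun_prop) (Or.inl (by norm_num))
  have hFd : DifferentiableOn ℂ F U :=
    DifferentiableOn.mul (by fun_prop) etaF_differentiableOn
  have hGd : DifferentiableOn ℂ G U := by
    rw [← Complex.differentiableOn_compl_singleton_and_continuousAt_iff
      (c := (1 : ℂ)) (isOpen_rePos.mem_nhds (by norm_num [hU]))]
    constructor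
    · intro z hz
      apply DifferentiableAt.differentiableWithinAt
      apply DifferentiableAt.mul (htwo z)
      exact DifferentiableAt.mul (by fun_prop) (differentiableAt_riemannZeta hz.2)
    · have hG1 : G 1 = 0 := by simp [hG]
      rw [ContinuousAt, hG1]
      rw [← nhdsNE_sup_pure (1 : ℂ), tendsto_sup]
      constructor
      · have h1 : Tendsto (fun z : ℂ => (1 : ℂ) - 2 ^ ((1 : ℂ) - z)) (nhdsWithin 1 {1}ᶜ)
            (nhds 0) := by
          have hc : ContinuousAt (fun z : ℂ => (1 : ℂ) - (2 : ℂ) ^ ((1 : ℂ) - z)) 1 :=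
            (htwo 1).continuousAt
          have := hc.continuousWithinAt (s := {(1:ℂ)}ᶜ)
          simpa using this.tendsto
        have := h1.mul riemannZeta_residue_one
        simpa using this
      · exact hG1 ▸ tendsto_pure_nhds G 1
  have hFa : AnalyticOnNhd ℂ F U := hFd.analyticOnNhd isOpen_rePos
  have hGa : AnalyticOnNhd ℂ G U := hGd.analyticOnNhd isOpen_rePos
  have hpre : IsPreconnected U := (convex_halfSpace_re_gt 0).isPreconnected
  have h2U : (2 : ℂ) ∈ U := by norm_num [hU]
  have hev : F =ᶠ[nhds (2 : ℂ)] G := by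
    have hopen : IsOpen {z : ℂ | 1 < z.re} := isOpen_lt continuous_const Complex.continuous_re
    filter_upwards [hopen.mem_nhds (by norm_num)] with z hz
    simp only [F, G, etaF_eq_of_one_lt hz]
    ring
  have heq := hFa.eqOn_of_preconnected_of_eventuallyEq hGa hpre h2U hev
  have hsU : s ∈ U := hs
  have h := heq hsU
  simp only [hF, hG] at h
  have hcancel : s - 1 ≠ 0 := sub_ne_zero.mpr hs1
  exact mul_left_cancel₀ hcancel (by linear_combination h)



lemma tendsto_of_even_odd {f : ℕ → ℂ} {L : ℂ}
    (he : Tendsto (fun N => f (2 * N)) atTop (nhds L))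
    (ho : Tendsto (fun N => f (2 * N + 1)) atTop (nhds L)) :
    Tendsto f atTop (nhds L) := by
  rw [Metric.tendsto_atTop] at he ho ⊢
  intro ε hε
  obtain ⟨N1, h1⟩ := he ε hε
  obtain ⟨N2, h2⟩ := ho ε hε
  refine ⟨2 * (max N1 N2) + 1, fun n hn => ?_⟩
  rcases Nat.even_or_odd n with ⟨m, hm⟩ | ⟨m, hm⟩
  · have hm' : n = 2 * m := by omega
    rw [hm']
    exact h1 m (by omega)
  · rw [hm]
    exact h2 m (by omega)

lemma etaTerm_tendsto_zero {s : ℂ} (hs : 0 < s.re) :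
    Tendsto (fun n : ℕ => etaTerm s n) atTop (nhds 0) := by
  apply squeeze_zero_norm (a := fun n : ℕ => ((n : ℝ) + 1) ^ (-s.re))
  · intro n
    have hpos : (0 : ℝ) < (n : ℝ) + 1 := by positivity
    simp only [etaTerm, norm_mul, norm_pow, norm_neg, norm_one, one_pow, one_mul]
    have : ((n + 1 : ℕ) : ℂ) = (((n : ℝ) + 1 : ℝ) : ℂ) := by push_cast; ring
    rw [this, Complex.norm_cpow_eq_rpow_re_of_pos hpos]
    simp
  · have h1 : Tendsto (fun n : ℕ => (n : ℝ) + 1) atTop atTop :=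
      tendsto_atTop_add_const_right _ _ tendsto_natCast_atTop_atTop
    exact (tendsto_rpow_neg_atTop hs).comp h1
lemma etaSeries_tendsto {s : ℂ} (hs : 0 < s.re) (hs1 : s ≠ 1) :
    Tendsto (fun N : ℕ => ∑ n ∈ range N, (-1 : ℂ) ^ n * ((n + 1 : ℕ) : ℂ) ^ (-s)) atTop
      (nhds ((1 - 2 ^ ((1 : ℂ) - s)) * riemannZeta s)) := by
  have hsum := etaPair_summable s hs
  have heven : Tendsto (fun N : ℕ => ∑ n ∈ range N, etaPair s n) atTop (nhds (etaF s)) :=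
    hsum.hasSum.tendsto_sum_nat
  set P : ℕ → ℂ := fun N => ∑ n ∈ range N, etaTerm s n with hP
  have he : Tendsto (fun N => P (2 * N)) atTop (nhds (etaF s)) := by
    have : (fun N => P (2 * N)) = fun N => ∑ n ∈ range N, etaPair s n := by
      funext N; rw [hP]; exact etaTerm_pairing s N
    rw [this]; exact heven
  have ho : Tendsto (fun N => P (2 * N + 1)) atTop (nhds (etaF s)) := by
    have heq : (fun N => P (2 * N + 1)) = fun N => P (2 * N) + etaTerm s (2 * N) := by
      funext N; rw [hP]; exact sum_range_succ _ _
    rw [heq]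
    have hz : Tendsto (fun N : ℕ => etaTerm s (2 * N)) atTop (nhds 0) :=
      (etaTerm_tendsto_zero hs).comp (tendsto_atTop_atTop_of_monotone
        (fun a b hab => by omega) (fun b => ⟨b, by omega⟩))
    simpa using he.add hz
  have := tendsto_of_even_odd he ho
  rw [etaF_eq hs hs1] at this
  exact this.congr (fun N => by rw [hP]; rfl)


/-- For `k ≥ 1` and `ρ = kω + ω/2 - λ`, the function `x^{-1/2+iρ}` is an eigenfunction of
`H₋ = A†(ω) A(ω)` with the real nonnegative eigenvalue
`E_k = |(1 - 2^{1/2 - i(kω - λ)}) ζ(1/2 + i(λ - kω))|²`. Here `g = A(ω) x^{-1/2+iρ}` is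
defined for `y > 0` as the limit of the partial sums below, and the series defining
`(A†(ω) g)(x)` converges (as the limit of its partial sums) to `E_k · x^{-1/2+iρ}`. -/
theorem Hminus_eigenvalue_excited (ω lam : ℝ) (k : ℕ) (hk : 0 < k)
    (ρ : ℝ) (hρ : ρ = k * ω + ω / 2 - lam) (g : ℝ → ℂ)
    (hg : ∀ y : ℝ, 0 < y →
      Filter.Tendsto
        (fun N : ℕ => (y : ℂ) ^ (-(Complex.I * (ω : ℂ)) / 2) *
          ∑ n ∈ Finset.range N, (-1 : ℂ) ^ n *
            ((((n + 1 : ℕ) : ℝ) * y : ℝ) : ℂ) ^ (-(Complex.I * (ω : ℂ)) / 2) *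
            ((((n + 1 : ℕ) : ℝ) * y : ℝ) : ℂ) ^ (-(1 / 2 : ℂ) + Complex.I * (ρ : ℂ)))
        Filter.atTop (nhds (g y)))
    (x : ℝ) (hx : 0 < x) :
    Filter.Tendsto
      (fun N : ℕ => (x : ℂ) ^ (Complex.I * (ω : ℂ) / 2) *
        ∑ m ∈ Finset.range N, (-1 : ℂ) ^ m * ((m + 1 : ℕ) : ℂ)⁻¹ *
          (((x / ((m + 1 : ℕ) : ℝ)) : ℝ) : ℂ) ^ (Complex.I * (ω : ℂ) / 2) *
          g (x / ((m + 1 : ℕ) : ℝ)))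
      Filter.atTop
      (nhds (((‖
          (1 - (2 : ℂ) ^ ((1 / 2 : ℂ) - Complex.I * ((k : ℂ) * (ω : ℂ) - (lam : ℂ)))) *
            riemannZeta ((1 / 2 : ℂ) + Complex.I * ((lam : ℂ) - (k : ℂ) * (ω : ℂ)))‖ ^ 2 : ℝ) : ℂ) *
        (x : ℂ) ^ (-(1 / 2 : ℂ) + Complex.I * (ρ : ℂ)))) := by
  set t : ℝ := k * ω - lam with ht
  set u : ℂ := (1 / 2 : ℂ) + Complex.I * (t : ℂ) with hu
  set ub : ℂ := (1 / 2 : ℂ) - Complex.I * (t : ℂ) with hub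
  have hconj : (starRingEnd ℂ) u = ub := by
    simp only [hu, hub, map_add, map_div₀, map_one, map_ofNat, map_mul, Complex.conj_I,
      Complex.conj_ofReal]
    ring
  have hure : u.re = 1 / 2 := by simp [hu]
  have hubre : ub.re = 1 / 2 := by simp [hub]
  have hu1 : u ≠ 1 := fun h => by rw [h] at hure; norm_num at hure
  have hub1 : ub ≠ 1 := fun h => by rw [h] at hubre; norm_num at hubre
  have htc : (t : ℂ) = (k : ℂ) * (ω : ℂ) - (lam : ℂ) := by rw [ht]; push_cast; ring
  have hρc : (ρ : ℂ) = (t : ℂ) + (ω : ℂ) / 2 := by rw [hρ, ht]; push_cast; ring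
  set e1 : ℂ := -(Complex.I * (ω : ℂ)) / 2 with he1
  set e2 : ℂ := -(1 / 2 : ℂ) + Complex.I * (ρ : ℂ) with he2
  set f1 : ℂ := Complex.I * (ω : ℂ) / 2 with hf1
  have he12 : e1 + e2 = -ub := by
    rw [he1, he2, hub, hρc]; ring
  set Cval : ℂ := (1 - 2 ^ ((1 : ℂ) - ub)) * riemannZeta ub with hCval
  set Dval : ℂ := (1 - 2 ^ ((1 : ℂ) - u)) * riemannZeta u with hDval
  have hCt := etaSeries_tendsto (s := ub) (by rw [hubre]; norm_num) hub1
  have hDt := etaSeries_tendsto (s := u) (by rw [hure]; norm_num) hu1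
  -- Step 1: determine g
  have hgval : ∀ y : ℝ, 0 < y → g y = (y : ℂ) ^ (e1 + (e1 + e2)) * Cval := by
    intro y hy
    have hyne : (y : ℂ) ≠ 0 := Complex.ofReal_ne_zero.mpr hy.ne'
    have hinner : ∀ N : ℕ,
        (y : ℂ) ^ e1 * ∑ n ∈ range N, (-1 : ℂ) ^ n *
            ((((n + 1 : ℕ) : ℝ) * y : ℝ) : ℂ) ^ e1 * ((((n + 1 : ℕ) : ℝ) * y : ℝ) : ℂ) ^ e2
          = (y : ℂ) ^ (e1 + (e1 + e2)) *
            ∑ n ∈ range N, (-1 : ℂ) ^ n * ((n + 1 : ℕ) : ℂ) ^ (-ub) := by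
      intro N
      rw [mul_sum, mul_sum]
      apply sum_congr rfl
      intro n _
      have hn1 : (0 : ℝ) < ((n + 1 : ℕ) : ℝ) := by positivity
      have hc : (0 : ℝ) < ((n + 1 : ℕ) : ℝ) * y := by positivity
      have hcc : ((((n + 1 : ℕ) : ℝ) * y : ℝ) : ℂ) ≠ 0 := Complex.ofReal_ne_zero.mpr hc.ne'
      have h1 : ((((n + 1 : ℕ) : ℝ) * y : ℝ) : ℂ) ^ e1 * ((((n + 1 : ℕ) : ℝ) * y : ℝ) : ℂ) ^ e2
          = ((((n + 1 : ℕ) : ℝ) * y : ℝ) : ℂ) ^ (e1 + e2) := (Complex.cpow_add _ _ hcc).symm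
      have h2 : ((((n + 1 : ℕ) : ℝ) * y : ℝ) : ℂ) ^ (e1 + e2)
          = ((n + 1 : ℕ) : ℂ) ^ (e1 + e2) * (y : ℂ) ^ (e1 + e2) := by
        have h := Complex.mul_cpow_ofReal_nonneg hn1.le hy.le (e1 + e2)
        push_cast at h ⊢
        exact h
      have h3 : (y : ℂ) ^ (e1 + (e1 + e2)) = (y : ℂ) ^ e1 * (y : ℂ) ^ (e1 + e2) :=
        Complex.cpow_add _ _ hyne
      rw [mul_assoc, h1, h2, h3, he12]
      ring
    have hlim2 : Tendsto (fun N : ℕ => (y : ℂ) ^ e1 * ∑ n ∈ range N, (-1 : ℂ) ^ n *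
            ((((n + 1 : ℕ) : ℝ) * y : ℝ) : ℂ) ^ e1 * ((((n + 1 : ℕ) : ℝ) * y : ℝ) : ℂ) ^ e2)
        atTop (nhds ((y : ℂ) ^ (e1 + (e1 + e2)) * Cval)) := by
      have := hCt.const_mul ((y : ℂ) ^ (e1 + (e1 + e2)))
      rw [← hCval] at this
      exact this.congr (fun N => (hinner N).symm)
    exact tendsto_nhds_unique (hg y hy) hlim2
  -- Step 2: outer sums
  have houter : ∀ N : ℕ,
      (x : ℂ) ^ f1 * ∑ m ∈ range N, (-1 : ℂ) ^ m * ((m + 1 : ℕ) : ℂ)⁻¹ *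
          (((x / ((m + 1 : ℕ) : ℝ)) : ℝ) : ℂ) ^ f1 * g (x / ((m + 1 : ℕ) : ℝ))
        = (Cval * (x : ℂ) ^ (f1 + -ub)) *
          ∑ m ∈ range N, (-1 : ℂ) ^ m * ((m + 1 : ℕ) : ℂ) ^ (-u) := by
    intro N
    have hxne : (x : ℂ) ≠ 0 := Complex.ofReal_ne_zero.mpr hx.ne'
    rw [mul_sum, mul_sum]
    apply sum_congr rfl
    intro m _
    have hm1 : (0 : ℝ) < ((m + 1 : ℕ) : ℝ) := by positivity
    have hd : (0 : ℝ) < x / ((m + 1 : ℕ) : ℝ) := by positivity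
    rw [hgval _ hd]
    have hdd : (((x / ((m + 1 : ℕ) : ℝ)) : ℝ) : ℂ) ≠ 0 := Complex.ofReal_ne_zero.mpr hd.ne'
    have h1 : (((x / ((m + 1 : ℕ) : ℝ)) : ℝ) : ℂ) ^ f1 *
          (((x / ((m + 1 : ℕ) : ℝ)) : ℝ) : ℂ) ^ (e1 + (e1 + e2))
        = (((x / ((m + 1 : ℕ) : ℝ)) : ℝ) : ℂ) ^ (-ub) := by
      rw [← Complex.cpow_add _ _ hdd]
      congr 1
      rw [he12, hf1, he1]
      ring
    have h2 : (((x / ((m + 1 : ℕ) : ℝ)) : ℝ) : ℂ) ^ (-ub)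
        = (x : ℂ) ^ (-ub) * (((m + 1 : ℕ) : ℂ))⁻¹ ^ (-ub) := by
      have hdiv : (x / ((m + 1 : ℕ) : ℝ) : ℝ) = x * (((m + 1 : ℕ) : ℝ))⁻¹ := by
        rw [div_eq_mul_inv]
      rw [hdiv]
      have h := Complex.mul_cpow_ofReal_nonneg hx.le (inv_nonneg.mpr hm1.le) (-ub)
      push_cast at h ⊢
      exact h
    have harg : ((m + 1 : ℕ) : ℂ).arg ≠ Real.pi := by
      rw [Complex.natCast_arg]
      exact Real.pi_ne_zero.symm
    have h3 : (((m + 1 : ℕ) : ℂ))⁻¹ ^ (-ub) = ((m + 1 : ℕ) : ℂ) ^ (ub : ℂ) := by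
      rw [Complex.inv_cpow _ _ harg, ← Complex.cpow_neg, neg_neg]
    have h4 : ((m + 1 : ℕ) : ℂ)⁻¹ * ((m + 1 : ℕ) : ℂ) ^ (ub : ℂ)
        = ((m + 1 : ℕ) : ℂ) ^ (-u) := by
      have hne : ((m + 1 : ℕ) : ℂ) ≠ 0 := Nat.cast_ne_zero.mpr (by omega)
      rw [show ((m + 1 : ℕ) : ℂ)⁻¹ = ((m + 1 : ℕ) : ℂ) ^ (-1 : ℂ) by
          rw [Complex.cpow_neg_one],
        ← Complex.cpow_add _ _ hne]
      congr 1
      rw [hub, hu]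
      ring
    have h5 : (x : ℂ) ^ (f1 + -ub) = (x : ℂ) ^ f1 * (x : ℂ) ^ (-ub) :=
      Complex.cpow_add _ _ hxne
    calc (x : ℂ) ^ f1 * ((-1 : ℂ) ^ m * ((m + 1 : ℕ) : ℂ)⁻¹ *
          (((x / ((m + 1 : ℕ) : ℝ)) : ℝ) : ℂ) ^ f1 *
          ((((x / ((m + 1 : ℕ) : ℝ)) : ℝ) : ℂ) ^ (e1 + (e1 + e2)) * Cval))
        = (x : ℂ) ^ f1 * ((-1 : ℂ) ^ m * ((m + 1 : ℕ) : ℂ)⁻¹ *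
          ((((x / ((m + 1 : ℕ) : ℝ)) : ℝ) : ℂ) ^ f1 *
            (((x / ((m + 1 : ℕ) : ℝ)) : ℝ) : ℂ) ^ (e1 + (e1 + e2))) * Cval) := by ring
      _ = (x : ℂ) ^ f1 * ((-1 : ℂ) ^ m * ((m + 1 : ℕ) : ℂ)⁻¹ *
          ((x : ℂ) ^ (-ub) * (((m + 1 : ℕ) : ℂ))⁻¹ ^ (-ub)) * Cval) := by rw [h1, h2]
      _ = (x : ℂ) ^ f1 * (x : ℂ) ^ (-ub) * Cval * ((-1 : ℂ) ^ m *
            (((m + 1 : ℕ) : ℂ)⁻¹ * (((m + 1 : ℕ) : ℂ))⁻¹ ^ (-ub))) := by ring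
      _ = Cval * (x : ℂ) ^ (f1 + -ub) * ((-1 : ℂ) ^ m * ((m + 1 : ℕ) : ℂ) ^ (-u)) := by
          rw [h5, h3, h4]; ring
  -- Step 3: Cval = conj Dval
  have hCconj : Cval = (starRingEnd ℂ) Dval := by
    have hPQ : ∀ N : ℕ, (starRingEnd ℂ) (∑ m ∈ range N, (-1 : ℂ) ^ m * ((m + 1 : ℕ) : ℂ) ^ (-u))
        = ∑ n ∈ range N, (-1 : ℂ) ^ n * ((n + 1 : ℕ) : ℂ) ^ (-ub) := by
      intro N
      rw [map_sum]
      apply sum_congr rfl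
      intro m _
      rw [map_mul, map_pow, map_neg, map_one]
      congr 1
      have harg : ((m + 1 : ℕ) : ℂ).arg ≠ Real.pi := by
        rw [Complex.natCast_arg]; exact Real.pi_ne_zero.symm
      have h := Complex.cpow_conj ((m + 1 : ℕ) : ℂ) (-u) harg
      rw [map_neg, hconj] at h
      rw [h, Complex.conj_natCast]
    have h1 : Tendsto (fun N : ℕ =>
        (starRingEnd ℂ) (∑ m ∈ range N, (-1 : ℂ) ^ m * ((m + 1 : ℕ) : ℂ) ^ (-u))) atTop
        (nhds ((starRingEnd ℂ) Dval)) := by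
      exact (Complex.continuous_conj.tendsto Dval).comp hDt
    have h2 := h1.congr (fun N => hPQ N)
    exact tendsto_nhds_unique hCt h2
  -- Step 4: the eigenvalue identity
  have hargE : (1 / 2 : ℂ) - Complex.I * ((k : ℂ) * (ω : ℂ) - (lam : ℂ)) = 1 - u := by
    rw [← htc, hu]; ring
  have hargZ : (1 / 2 : ℂ) + Complex.I * ((lam : ℂ) - (k : ℂ) * (ω : ℂ)) = ub := by
    rw [hub, htc]; ring
  have habs2 : ‖(1 - 2 ^ ((1 : ℂ) - u) : ℂ)‖ = ‖(1 - 2 ^ ((1 : ℂ) - ub) : ℂ)‖ := by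
    have harg2 : (2 : ℂ).arg ≠ Real.pi := by
      rw [show (2 : ℂ) = ((2 : ℕ) : ℂ) by norm_num, Complex.natCast_arg]
      exact Real.pi_ne_zero.symm
    have h := Complex.cpow_conj (2 : ℂ) ((1 : ℂ) - u) harg2
    have hc2 : (starRingEnd ℂ) (2 : ℂ) = 2 := by
      rw [show (2 : ℂ) = ((2 : ℕ) : ℂ) by norm_num, Complex.conj_natCast]
    rw [map_sub, map_one, hconj, hc2] at h
    calc ‖(1 - 2 ^ ((1 : ℂ) - u) : ℂ)‖
        = ‖(starRingEnd ℂ) (1 - 2 ^ ((1 : ℂ) - u))‖ := (Complex.norm_conj _).symm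
      _ = ‖(1 - 2 ^ ((1 : ℂ) - ub) : ℂ)‖ := by rw [map_sub, map_one, ← h]
  have hEeq : ((‖
      (1 - (2 : ℂ) ^ ((1 / 2 : ℂ) - Complex.I * ((k : ℂ) * (ω : ℂ) - (lam : ℂ)))) *
        riemannZeta ((1 / 2 : ℂ) + Complex.I * ((lam : ℂ) - (k : ℂ) * (ω : ℂ)))‖ ^ 2 : ℝ) : ℂ)
      = Cval * Dval := by
    rw [hargE, hargZ]
    have h1 : ‖(1 - (2 : ℂ) ^ ((1 : ℂ) - u)) * riemannZeta ub‖
        = ‖Cval‖ := by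
      rw [norm_mul, norm_mul, habs2]
    have h2 : ‖Cval‖ = ‖Dval‖ := by
      rw [hCconj, Complex.norm_conj]
    have h3 : Cval * Dval = ((Complex.normSq Dval : ℝ) : ℂ) := by
      rw [hCconj, mul_comm, Complex.mul_conj]
    rw [h1, h2, h3]
    norm_cast
    rw [Complex.normSq_eq_norm_sq]
  -- Step 5: conclude
  have hfinal : (x : ℂ) ^ (f1 + -ub) = (x : ℂ) ^ (-(1 / 2 : ℂ) + Complex.I * (ρ : ℂ)) := by
    congr 1
    rw [hf1, hub, hρc]
    ring
  have hlim : Tendsto (fun N : ℕ =>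
      (Cval * (x : ℂ) ^ (f1 + -ub)) * ∑ m ∈ range N, (-1 : ℂ) ^ m * ((m + 1 : ℕ) : ℂ) ^ (-u))
      atTop (nhds ((Cval * (x : ℂ) ^ (f1 + -ub)) * Dval)) := by
    have := hDt.const_mul (Cval * (x : ℂ) ^ (f1 + -ub))
    rw [← hDval] at this
    exact this
  have hlim2 := hlim.congr (fun N => (houter N).symm)
  have hvalue : (Cval * (x : ℂ) ^ (f1 + -ub)) * Dval
      = ((‖
          (1 - (2 : ℂ) ^ ((1 / 2 : ℂ) - Complex.I * ((k : ℂ) * (ω : ℂ) - (lam : ℂ)))) *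
            riemannZeta ((1 / 2 : ℂ) + Complex.I * ((lam : ℂ) - (k : ℂ) * (ω : ℂ)))‖ ^ 2 : ℝ) : ℂ) *
        (x : ℂ) ^ (-(1 / 2 : ℂ) + Complex.I * (ρ : ℂ)) := by
    rw [hEeq, hfinal]
    ring
  rw [← hvalue]
  exact hlim2
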